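/- The quotient of Λ(Γ) ⊗ A^{⊗n} by the two-sided ideal generated by the elements G_e ⊗ (a[i] − a[j]), where e = {i,j} ranges over E(Γ) and a over A, is isomorphic as a k-module to ⊕_{S⊆E(Γ)} A^{⊗l(S)}; explicitly, the k-linear map sending the class of G_S ⊗ (a₁⊗…⊗a_n) to G_S ⊗ (b₁⊗…⊗b_{l(S)}), where b_m is the product in A of those a_i with vertex i lying in the m-th connected component of ({1,…,n},S), is a well-defined k-module isomorphism. -/

import Mathlib

/-!
Statement 13. Let `k` be a commutative ring, `A` a commutative `k`-algebra and `Γ` a finite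
simple graph on `{1,…,n}` with linearly ordered edge set.  The quotient of
`Λ(Γ) ⊗ A^{⊗n}` by the two-sided ideal generated by the elements `G_e ⊗ (a[i] − a[j])`
(`e = {i,j}` an edge, `a ∈ A`) is isomorphic as a `k`-module to `⊕_{S ⊆ E(Γ)} A^{⊗l(S)}`;
explicitly, the `k`-linear map sending the class of `G_S ⊗ (a₁ ⊗ … ⊗ a_n)` to
`G_S ⊗ (b₁ ⊗ … ⊗ b_{l(S)})`, where `b_m` is the product of the `a_i` over the `m`-th
connected component of `({1,…,n}, S)` (components ordered by their least vertex), is a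
well-defined `k`-module isomorphism.
-/

open scoped TensorProduct

noncomputable section

open scoped Classical

variable (k A : Type) [CommRing k] [CommRing A] [Algebra k A] {n : ℕ}

/-- The `n`-th tensor power `A^{⊗n}` of `A`, as a `k`-algebra. -/
abbrev TPow (n : ℕ) : Type := ⨂[k] (_ : Fin n), A

/-- The exterior algebra `Λ(Γ)` on the edges of a simple graph `Γ`. -/
abbrev GraphExt {V : Type} (Γ : SimpleGraph V) : Type := ExteriorAlgebra k (↥Γ.edgeSet → k)

/-- `a[i] = 1 ⊗ ⋯ ⊗ a ⊗ ⋯ ⊗ 1 ∈ A^{⊗n}` with `a` in the `i`-th position. -/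
def elemAt (i : Fin n) (a : A) : TPow k A n :=
  PiTensorProduct.tprod k (Function.update (fun _ => (1 : A)) i a)

variable {V : Type} [DecidableEq V]

/-- The generator `G_e` of `Λ(Γ)` corresponding to an edge `e` of `Γ`. -/
def gen (Γ : SimpleGraph V) (e : ↥Γ.edgeSet) : GraphExt k Γ :=
  ExteriorAlgebra.ι k (Pi.single e 1)

/-- `G_S`: the exterior product of the generators of the edges of `S` in the fixed order. -/
def edgeMonomial (Γ : SimpleGraph V) [LinearOrder ↥Γ.edgeSet] (S : Finset ↥Γ.edgeSet) :
    GraphExt k Γ :=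
  (List.ofFn fun j : Fin S.card => gen k Γ (S.orderIsoOfFin rfl j : ↥Γ.edgeSet)).prod

/-- Two vertices are related if they are joined by a walk using edges of `S`. -/
def erel (Γ : SimpleGraph (Fin n)) (S : Finset ↥Γ.edgeSet) (x y : Fin n) : Prop :=
  Relation.ReflTransGen (fun u v => ∃ e ∈ S, (e : Sym2 (Fin n)) = s(u, v)) x y

/-- `i` is the least vertex of its connected component of `({1,…,n}, S)`. -/
def isRep (Γ : SimpleGraph (Fin n)) (S : Finset ↥Γ.edgeSet) (i : Fin n) : Prop :=
  ∀ j : Fin n, erel Γ S i j → i ≤ j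

/-- The set of least vertices of the connected components of `({1,…,n}, S)`. -/
def reps (Γ : SimpleGraph (Fin n)) (S : Finset ↥Γ.edgeSet) : Finset (Fin n) :=
  Finset.univ.filter (isRep Γ S)

/-- `l(S)`: the number of connected components of `({1,…,n}, S)`. -/
def lS (Γ : SimpleGraph (Fin n)) (S : Finset ↥Γ.edgeSet) : ℕ := (reps Γ S).card

/-- The least vertex of the `m`-th connected component (components ordered by least
vertex). -/
def repfun (Γ : SimpleGraph (Fin n)) (S : Finset ↥Γ.edgeSet) (m : Fin (lS Γ S)) : Fin n :=
  ((reps Γ S).orderIsoOfFin rfl m : Fin n)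

/-- `b_m`: the product of the `a_i` over the `m`-th connected component of
`({1,…,n}, S)`. -/
def bval (Γ : SimpleGraph (Fin n)) (S : Finset ↥Γ.edgeSet) (a : Fin n → A)
    (m : Fin (lS Γ S)) : A :=
  ∏ i ∈ Finset.univ.filter (fun i => erel Γ S (repfun Γ S m) i), a i

/-- The two-sided ideal of `Λ(Γ) ⊗ A^{⊗n}` generated by the elements
`G_e ⊗ (a[i] − a[j])` for `e = {i,j} ∈ E(Γ)` and `a ∈ A`, realized as the `k`-span of
the products `p * (G_e ⊗ (a[i] − a[j])) * q`. -/
def relIdeal (Γ : SimpleGraph (Fin n)) : Submodule k (GraphExt k Γ ⊗[k] TPow k A n) :=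
  Submodule.span k
    {z | ∃ (p q : GraphExt k Γ ⊗[k] TPow k A n) (e : ↥Γ.edgeSet) (i j : Fin n) (a : A),
      (e : Sym2 (Fin n)) = s(i, j) ∧
      z = p * (gen k Γ e ⊗ₜ[k] (elemAt k A i a - elemAt k A j a)) * q}

/-- `⊕_{S ⊆ E(Γ)} A^{⊗ l(S)}`. -/
abbrev BSTarget (Γ : SimpleGraph (Fin n)) : Type :=
  DirectSum (Finset ↥Γ.edgeSet) fun S => ⨂[k] (_ : Fin (lS Γ S)), A

/-! ### Auxiliary machinery -/

namespace Stmt13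

open PiTensorProduct Finset

section Tmap

variable {k A : Type} [CommRing k] [CommRing A] [Algebra k A] {n p q : ℕ}

lemma elemAt_eq_singleAlgHom (i : Fin p) (a : A) :
    elemAt k A i a = PiTensorProduct.singleAlgHom (R := k) (A := fun _ : Fin p => A) i a := by
  simp only [elemAt, PiTensorProduct.singleAlgHom_apply]
  congr 1

lemma elemAt_mul (i : Fin p) (a b : A) :
    elemAt k A i a * elemAt k A i b = elemAt k A i (a * b) := by
  simp only [elemAt_eq_singleAlgHom, ← _root_.map_mul]

lemma elemAt_one (i : Fin p) : elemAt k A i (1 : A) = 1 := by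
  simp only [elemAt_eq_singleAlgHom, _root_.map_one]

lemma elemAt_prod {τ : Type} (s : Finset τ) (i : Fin p) (c : τ → A) :
    elemAt k A i (∏ t ∈ s, c t) = ∏ t ∈ s, elemAt k A i (c t) := by
  simp only [elemAt_eq_singleAlgHom, _root_.map_prod]

lemma elemAt_sub (i : Fin p) (a b : A) :
    elemAt k A i (a - b) = elemAt k A i a - elemAt k A i b := by
  simp only [elemAt_eq_singleAlgHom, _root_.map_sub]

/-- Product of `elemAt`s as a pure tensor. -/
lemma prod_elemAt (g : Fin p → Fin q) (a : Fin p → A) :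
    (∏ i, elemAt k A (g i) (a i)) =
      PiTensorProduct.tprod k (fun j => ∏ i ∈ Finset.univ.filter (fun i => g i = j), a i) := by
  classical
  have : (∏ i, elemAt k A (g i) (a i)) =
      PiTensorProduct.tprod k (∏ i, Pi.mulSingle (g i) (a i)) := by
    rw [PiTensorProduct.tprod_prod]
    rfl
  rw [this]
  congr 1
  funext j
  rw [Finset.prod_apply]
  rw [Finset.prod_filter]
  apply Finset.prod_congr rfl
  intro i _
  by_cases h : g i = j
  · simp [h, Pi.mulSingle_apply]
  · simp [h, Pi.mulSingle_apply, Ne.symm h]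

lemma tprod_eq_prod_elemAt (a : Fin p → A) :
    PiTensorProduct.tprod k a = ∏ i, elemAt k A i (a i) := by
  classical
  rw [prod_elemAt (g := fun i => i)]
  congr 1
  funext j
  rw [show (Finset.univ.filter (fun i : Fin p => i = j)) = {j} by
    ext x; simp]
  simp

/-- The algebra homomorphism `A^{⊗p} → A^{⊗q}` induced by a map of index sets. -/
def Tmap (g : Fin p → Fin q) : TPow k A p →ₐ[k] TPow k A q :=
  PiTensorProduct.liftAlgHom
    (f := (MultilinearMap.mkPiAlgebra k (Fin p) (TPow k A q)).compLinearMap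
      (fun i => (PiTensorProduct.singleAlgHom (R := k) (A := fun _ : Fin q => A)
        (g i)).toLinearMap))
    (by
      simp only [MultilinearMap.compLinearMap_apply, MultilinearMap.mkPiAlgebra_apply,
        AlgHom.toLinearMap_apply, Pi.one_apply, _root_.map_one]
      exact Finset.prod_const_one) (by
      intro x y
      simp only [MultilinearMap.compLinearMap_apply, MultilinearMap.mkPiAlgebra_apply,
        AlgHom.toLinearMap_apply, Pi.mul_apply, _root_.map_mul]
      rw [Finset.prod_mul_distrib])

lemma Tmap_tprod (g : Fin p → Fin q) (a : Fin p → A) :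
    Tmap g (PiTensorProduct.tprod k a) = ∏ i, elemAt k A (g i) (a i) := by
  simp only [Tmap, PiTensorProduct.liftAlgHom_apply, PiTensorProduct.lift.tprod,
    MultilinearMap.compLinearMap_apply, MultilinearMap.mkPiAlgebra_apply,
    AlgHom.toLinearMap_apply]
  exact Finset.prod_congr rfl fun i _ => (elemAt_eq_singleAlgHom _ _).symm

lemma Tmap_elemAt (g : Fin p → Fin q) (i : Fin p) (a : A) :
    Tmap g (elemAt k A i a) = elemAt k A (g i) a := by
  classical
  rw [elemAt, Tmap_tprod]
  rw [Finset.prod_eq_single i]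
  · simp [Function.update]
  · intro j _ hj
    rw [Function.update_of_ne hj, elemAt_one]
  · simp

end Tmap

end Stmt13
namespace Stmt13

open Finset

section Fock

variable (k : Type) [CommRing k]
variable (E : Type) [DecidableEq E] [LinearOrder E]

/-- The sign picked up when inserting `e` into the monomial indexed by `S`. -/
def csign (e : E) (S : Finset E) : k :=
  (-1 : k) ^ (S.filter (fun f => f < e)).card

/-- Creation operator on the fermionic Fock space. -/
def cOp (e : E) : (Finset E →₀ k) →ₗ[k] (Finset E →₀ k) :=
  Finsupp.lsum k fun S =>
    if e ∈ S then (0 : k →ₗ[k] (Finset E →₀ k))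
    else csign k E e S • Finsupp.lsingle (insert e S)

variable {E}

lemma cOp_single (e : E) (S : Finset E) (x : k) :
    cOp k E e (Finsupp.single S x) =
      if e ∈ S then 0
      else csign k E e S • Finsupp.single (insert e S) x := by
  rw [cOp, Finsupp.lsum_single]
  split_ifs with h
  · rfl
  · simp [Finsupp.lsingle]

lemma csign_key (e f : E) (hef : e ≠ f) (S : Finset E)
    (he : e ∉ S) (hf : f ∉ S) :
    csign k E f S * csign k E e (insert f S) +
      csign k E e S * csign k E f (insert e S) = 0 := by
  simp only [csign]
  rcases hef.lt_or_gt with h | h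
  · -- e < f
    rw [Finset.filter_insert, if_neg (fun hc : f < e => absurd (lt_trans h hc) (lt_irrefl e)),
      Finset.filter_insert, if_pos h,
      Finset.card_insert_of_notMem (fun hc => he (Finset.mem_filter.1 hc).1)]
    ring
  · -- f < e
    rw [Finset.filter_insert, if_pos h,
      Finset.card_insert_of_notMem (fun hc => hf (Finset.mem_filter.1 hc).1),
      Finset.filter_insert, if_neg (fun hc : e < f => absurd (lt_trans h hc) (lt_irrefl f))]
    ring

lemma cOp_sq (e : E) : cOp k E e ∘ₗ cOp k E e = 0 := by
  apply Finsupp.lhom_ext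
  intro S x
  simp only [LinearMap.comp_apply, LinearMap.zero_apply, cOp_single]
  by_cases h : e ∈ S
  · simp [h]
  · rw [if_neg h, map_smul, cOp_single, if_pos (Finset.mem_insert_self e S), smul_zero]

lemma cOp_anti (e f : E) :
    cOp k E e ∘ₗ cOp k E f + cOp k E f ∘ₗ cOp k E e = 0 := by
  by_cases hef : e = f
  · subst hef; rw [cOp_sq, add_zero]
  apply Finsupp.lhom_ext
  intro S x
  simp only [LinearMap.add_apply, LinearMap.comp_apply, LinearMap.zero_apply, cOp_single]
  by_cases hf : f ∈ S <;> by_cases he : e ∈ S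
  · simp [hf, he]
  · rw [if_pos hf, if_neg he, map_zero, map_smul, cOp_single,
      if_pos (Finset.mem_insert_of_mem hf), smul_zero, add_zero]
  · rw [if_pos he, if_neg hf, map_zero, map_smul, cOp_single,
      if_pos (Finset.mem_insert_of_mem he), smul_zero, zero_add]
  · rw [if_neg he, if_neg hf, map_smul, map_smul, cOp_single, cOp_single,
      if_neg (by simp [Finset.mem_insert, he, hef]),
      if_neg (by simp [Finset.mem_insert, hf, Ne.symm hef]),
      smul_smul, smul_smul, Finset.insert_comm f e S, ← add_smul,
      csign_key k e f hef S he hf, zero_smul]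

variable (E) [Fintype E]

/-- The creation action of a vector `v : E → k`. -/
def annih : (E → k) →ₗ[k] Module.End k (Finset E →₀ k) :=
  ∑ e : E, (LinearMap.proj e).smulRight (cOp k E e)

variable {E}

lemma annih_apply (v : E → k) :
    annih k E v = ∑ e : E, v e • cOp k E e := by
  simp [annih, LinearMap.sum_apply]

lemma annih_sq (v : E → k) : annih k E v * annih k E v = 0 := by
  rw [annih_apply, Finset.sum_mul_sum]
  have hterm : ∀ e f : E,
      (v e • cOp k E e) * (v f • cOp k E f)
        = (v e * v f) • (cOp k E e ∘ₗ cOp k E f) := by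
    intro e f
    rw [smul_mul_assoc, mul_smul_comm, smul_smul, Module.End.mul_eq_comp]
  simp only [hterm]
  rw [← Finset.sum_product']
  apply Finset.sum_ninvolution (fun p => (p.2, p.1))
  · intro ⟨e, f⟩
    dsimp only
    rw [mul_comm (v f) (v e), ← smul_add, cOp_anti, smul_zero]
  · intro ⟨e, f⟩ hne hfix
    apply hne
    have : e = f := congrArg Prod.snd hfix
    subst this
    rw [cOp_sq, smul_zero]
  · intro _; exact Finset.mem_univ _
  · intro _; rfl

variable (E)

/-- The Fock representation of the exterior algebra. -/
def fockHom : ExteriorAlgebra k (E → k) →ₐ[k] Module.End k (Finset E →₀ k) :=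
  ExteriorAlgebra.lift k ⟨annih k E, annih_sq k⟩

/-- The linear "basis decomposition" map of the exterior algebra. -/
def fock : ExteriorAlgebra k (E → k) →ₗ[k] (Finset E →₀ k) where
  toFun x := fockHom k E x (Finsupp.single ∅ 1)
  map_add' x y := by simp [map_add, LinearMap.add_apply]
  map_smul' c x := by simp

lemma fock_apply (x : ExteriorAlgebra k (E → k)) :
    fock k E x = fockHom k E x (Finsupp.single ∅ 1) := rfl

/-- Generator of the exterior algebra attached to `e : E`. -/
def genE (e : E) : ExteriorAlgebra k (E → k) :=
  ExteriorAlgebra.ι k (Pi.single e 1)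

lemma fockHom_genE (e : E) : fockHom k E (genE k E e) = cOp k E e := by
  rw [genE, fockHom, ExteriorAlgebra.lift_ι_apply, annih_apply]
  rw [Finset.sum_eq_single e]
  · rw [Pi.single_eq_same, one_smul]
  · intro f _ hfe
    rw [Pi.single_eq_of_ne hfe, zero_smul]
  · intro h; exact absurd (Finset.mem_univ e) h

/-- Product of generators along a list. -/
def genProdE (l : List E) : ExteriorAlgebra k (E → k) := (l.map (genE k E)).prod

lemma genProdE_nil : genProdE k E [] = 1 := rfl

lemma genProdE_cons (e : E) (l : List E) :
    genProdE k E (e :: l) = genE k E e * genProdE k E l := by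
  simp [genProdE]

lemma genProdE_append (l l' : List E) :
    genProdE k E (l ++ l') = genProdE k E l * genProdE k E l' := by
  simp [genProdE]

/-- The ordered monomial attached to a finite set of generators. -/
def monE (S : Finset E) : ExteriorAlgebra k (E → k) :=
  genProdE k E (S.sort (· ≤ ·))

lemma monE_empty : monE k E (∅ : Finset E) = 1 := by
  rw [monE, Finset.sort_empty, genProdE_nil]

lemma fock_genProdE (l : List E) (hl : List.Pairwise (· < ·) l) :
    fock k E (genProdE k E l) = Finsupp.single l.toFinset 1 := by
  induction l with
  | nil =>
    rw [genProdE_nil, fock_apply, map_one]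
    rfl
  | cons e l ih =>
    rw [List.pairwise_cons] at hl
    obtain ⟨he, hl⟩ := hl
    rw [genProdE_cons, fock_apply, map_mul, Module.End.mul_apply, ← fock_apply,
      ih hl, fockHom_genE, cOp_single]
    have hem : e ∉ l.toFinset := fun hc => absurd (he e (List.mem_toFinset.1 hc)) (lt_irrefl e)
    rw [if_neg hem]
    have : (l.toFinset.filter (fun f => f < e)) = ∅ := by
      apply Finset.eq_empty_of_forall_notMem
      intro x hx
      rw [Finset.mem_filter, List.mem_toFinset] at hx
      exact absurd (lt_trans hx.2 (he x hx.1)) (lt_irrefl x)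
    rw [csign, this, Finset.card_empty, pow_zero, one_smul, List.toFinset_cons]

lemma fock_monE (S : Finset E) :
    fock k E (monE k E S) = Finsupp.single S 1 := by
  rw [monE, fock_genProdE k E (S.sort (· ≤ ·)) (Finset.sortedLT_sort S).pairwise,
    Finset.sort_toFinset]

end Fock

end Stmt13
namespace Stmt13

open Finset

section Signs

variable (k : Type) [CommRing k]
variable {E : Type} [DecidableEq E] [LinearOrder E] [Fintype E]

lemma genE_sq (e : E) : genE k E e * genE k E e = 0 :=
  ExteriorAlgebra.ι_sq_zero _

lemma genE_swap (e f : E) : genE k E f * genE k E e = -(genE k E e * genE k E f) := by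
  have h := ExteriorAlgebra.ι_add_mul_swap (R := k) (Pi.single e 1 : E → k)
    (Pi.single f 1 : E → k)
  rw [genE, genE]
  exact eq_neg_of_add_eq_zero_right h

lemma moveFront : ∀ (l : List E) (e : E), e ∈ l →
    ∃ c : k, c * c = 1 ∧ genProdE k E l = c • (genE k E e * genProdE k E (l.erase e)) := by
  intro l
  induction l with
  | nil => intro e he; exact absurd he List.not_mem_nil
  | cons f l ih =>
    intro e he
    by_cases hef : e = f
    · subst hef
      exact ⟨1, mul_one 1, by rw [List.erase_cons_head, genProdE_cons, one_smul]⟩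
    · have hel : e ∈ l := by
        rcases List.mem_cons.1 he with h | h
        · exact absurd h hef
        · exact h
      obtain ⟨c, hc, hgen⟩ := ih e hel
      refine ⟨-c, by rw [neg_mul_neg]; exact hc, ?_⟩
      rw [List.erase_cons_tail (by simp [Ne.symm hef]), genProdE_cons, genProdE_cons, hgen,
        mul_smul_comm, ← mul_assoc, genE_swap, ← mul_assoc]
      rw [neg_mul, smul_neg, neg_smul]

lemma sortedInsertErase {e : E} {V : Finset E} (he : e ∉ V) :
    ((insert e V).sort (· ≤ ·)).erase e = V.sort (· ≤ ·) := by
  refine (fun h1 h2 h3 => List.Perm.eq_of_pairwise' (r := (· ≤ ·)) h2 h3 h1) ?_ ?_ ?_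
  · have p1 : List.Perm (((insert e V).sort (· ≤ ·)).erase e) (((insert e V).toList).erase e) :=
      (Finset.sort_perm_toList _ _).erase e
    have p2 : List.Perm (((insert e V).toList).erase e) ((e :: V.toList).erase e) :=
      (Finset.toList_insert he).erase e
    rw [List.erase_cons_head] at p2
    exact p1.trans (p2.trans (Finset.sort_perm_toList _ _).symm)
  · exact List.Pairwise.sublist List.erase_sublist (Finset.pairwise_sort _ _)
  · exact Finset.pairwise_sort _ _

lemma genE_mul_monE_not_mem {e : E} {V : Finset E} (he : e ∉ V) :
    ∃ c : k, c * c = 1 ∧ genE k E e * monE k E V = c • monE k E (insert e V) := by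
  obtain ⟨c, hc, h⟩ :=
    moveFront k ((insert e V).sort (· ≤ ·)) e (Finset.mem_sort _ |>.2 (mem_insert_self e V))
  rw [sortedInsertErase he] at h
  refine ⟨c, hc, ?_⟩
  simp only [monE] at h ⊢
  rw [h, smul_smul, hc, one_smul]

lemma genE_mul_monE_mem {e : E} {V : Finset E} (he : e ∈ V) :
    genE k E e * monE k E V = 0 := by
  obtain ⟨c, hc, h⟩ := moveFront k (V.sort (· ≤ ·)) e (Finset.mem_sort _ |>.2 he)
  rw [monE, h, mul_smul_comm, ← mul_assoc, genE_sq, zero_mul, smul_zero]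

lemma genE_mul_monE (e : E) (V : Finset E) :
    ∃ c : k, genE k E e * monE k E V = c • monE k E (insert e V) := by
  by_cases he : e ∈ V
  · exact ⟨0, by rw [genE_mul_monE_mem k he, zero_smul]⟩
  · obtain ⟨c, _, h⟩ := genE_mul_monE_not_mem k he
    exact ⟨c, h⟩

lemma genProdE_eq_smul_monE : ∀ l : List E,
    ∃ c : k, genProdE k E l = c • monE k E l.toFinset := by
  intro l
  induction l with
  | nil => exact ⟨1, by rw [genProdE_nil, List.toFinset_nil, monE_empty, one_smul]⟩
  | cons e l ih =>
    obtain ⟨c, hc⟩ := ih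
    obtain ⟨c', hc'⟩ := genE_mul_monE k e l.toFinset
    refine ⟨c * c', ?_⟩
    rw [genProdE_cons, hc, mul_smul_comm, hc', smul_smul, List.toFinset_cons]

lemma iota_eq_sum [Fintype E] (v : E → k) :
    ExteriorAlgebra.ι k v = ∑ e : E, v e • genE k E e := by
  have h1 : ∀ e : E, v e • genE k E e
      = ExteriorAlgebra.ι k (Pi.single e (v e) : E → k) := by
    intro e
    rw [genE, ← map_smul]
    congr 1
    rw [← Pi.single_smul, smul_eq_mul, mul_one]
  symm
  simp only [h1]
  rw [← map_sum, Finset.univ_sum_single]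

lemma span_monE [Fintype E] :
    Submodule.span k (Set.range (monE k E)) = ⊤ := by
  set M := Submodule.span k (Set.range (monE k E)) with hM
  have hmul : ∀ x : ExteriorAlgebra k (E → k), ∀ y ∈ M, x * y ∈ M := by
    intro x
    induction x using ExteriorAlgebra.induction with
    | algebraMap r =>
      intro y hy
      rw [← Algebra.smul_def]
      exact M.smul_mem r hy
    | ι v =>
      intro y hy
      refine Submodule.span_induction ?_ ?_ ?_ ?_ hy
      · rintro z ⟨S, rfl⟩
        rw [iota_eq_sum, Finset.sum_mul]
        apply Submodule.sum_mem
        intro e _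
        rw [smul_mul_assoc]
        apply M.smul_mem
        obtain ⟨c, hc⟩ := genE_mul_monE k e S
        rw [hc]
        exact M.smul_mem c (Submodule.subset_span ⟨_, rfl⟩)
      · rw [mul_zero]; exact M.zero_mem
      · intro a b _ _ ha hb; rw [mul_add]; exact M.add_mem ha hb
      · intro c a _ ha; rw [mul_smul_comm]; exact M.smul_mem c ha
    | mul x1 x2 h1 h2 =>
      intro y hy
      rw [mul_assoc]
      exact h1 _ (h2 y hy)
    | add x1 x2 h1 h2 =>
      intro y hy
      rw [add_mul]
      exact M.add_mem (h1 y hy) (h2 y hy)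
  rw [eq_top_iff]
  intro x _
  have hx := hmul x (monE k E ∅) (Submodule.subset_span ⟨∅, rfl⟩)
  rwa [monE_empty, mul_one] at hx

end Signs

end Stmt13
namespace Stmt13

open Finset

section Signs2

variable (k : Type) [CommRing k]
variable {E : Type} [DecidableEq E] [LinearOrder E] [Fintype E]

lemma monE_mul_genE_mul_monE (S T : Finset E) (e : E) :
    ∃ (c : k) (U : Finset E), e ∈ U ∧
      monE k E S * genE k E e * monE k E T = c • monE k E U := by
  have h1 : monE k E S * genE k E e * monE k E T
      = genProdE k E (S.sort (· ≤ ·) ++ e :: T.sort (· ≤ ·)) := by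
    rw [genProdE_append, genProdE_cons, monE, monE, mul_assoc]
  obtain ⟨c, hc⟩ := genProdE_eq_smul_monE k (S.sort (· ≤ ·) ++ e :: T.sort (· ≤ ·))
  refine ⟨c, _, ?_, by rw [h1, hc]⟩
  rw [List.mem_toFinset, List.mem_append]
  exact Or.inr List.mem_cons_self

end Signs2

end Stmt13
namespace Stmt13

open Finset

section Components

variable {n : ℕ} (Γ : SimpleGraph (Fin n)) (S : Finset ↥Γ.edgeSet)

lemma erel_refl (i : Fin n) : erel Γ S i i := Relation.ReflTransGen.refl

lemma erel_symm {i j : Fin n} (h : erel Γ S i j) : erel Γ S j i := by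
  refine @Std.Symm.symm _ _ (@Relation.ReflTransGen.stdSymm _ _ ⟨?_⟩) _ _ h
  rintro u v ⟨e, he, hs⟩
  exact ⟨e, he, by rw [hs]; exact Sym2.eq_swap⟩

lemma erel_trans {i j l : Fin n} (h : erel Γ S i j) (h' : erel Γ S j l) : erel Γ S i l :=
  Relation.ReflTransGen.trans h h'

lemma edge_erel {e : ↥Γ.edgeSet} {i j : Fin n} (he : e ∈ S)
    (hij : (e : Sym2 (Fin n)) = s(i, j)) : erel Γ S i j :=
  Relation.ReflTransGen.single ⟨e, he, hij⟩

/-- The least vertex of the connected component of `i`. -/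
def crep (i : Fin n) : Fin n :=
  (Finset.univ.filter (fun j => erel Γ S j i)).min'
    ⟨i, Finset.mem_filter.2 ⟨Finset.mem_univ i, erel_refl Γ S i⟩⟩

lemma erel_crep (i : Fin n) : erel Γ S (crep Γ S i) i := by
  have := Finset.min'_mem (Finset.univ.filter (fun j => erel Γ S j i))
    ⟨i, Finset.mem_filter.2 ⟨Finset.mem_univ i, erel_refl Γ S i⟩⟩
  exact (Finset.mem_filter.1 this).2

lemma crep_le {i j : Fin n} (h : erel Γ S j i) : crep Γ S i ≤ j := by
  have hmem : j ∈ Finset.univ.filter (fun l => erel Γ S l i) :=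
    Finset.mem_filter.2 ⟨Finset.mem_univ j, h⟩
  exact Finset.min'_le _ j hmem

lemma crep_isRep (i : Fin n) : isRep Γ S (crep Γ S i) := by
  intro j hj
  exact crep_le Γ S (erel_trans Γ S (erel_symm Γ S hj) (erel_crep Γ S i))

lemma crep_of_isRep {r : Fin n} (h : isRep Γ S r) : crep Γ S r = r :=
  le_antisymm (crep_le Γ S (erel_refl Γ S r)) (h _ (erel_symm Γ S (erel_crep Γ S r)))

lemma crep_eq_of_erel {i j : Fin n} (h : erel Γ S i j) : crep Γ S i = crep Γ S j :=
  le_antisymm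
    (crep_le Γ S (erel_trans Γ S (erel_crep Γ S j) (erel_symm Γ S h)))
    (crep_le Γ S (erel_trans Γ S (erel_crep Γ S i) h))

lemma crep_mem_reps (i : Fin n) : crep Γ S i ∈ reps Γ S :=
  Finset.mem_filter.2 ⟨Finset.mem_univ _, crep_isRep Γ S i⟩

lemma repfun_mem_reps (m : Fin (lS Γ S)) : repfun Γ S m ∈ reps Γ S :=
  ((reps Γ S).orderIsoOfFin rfl m).2

lemma repfun_isRep (m : Fin (lS Γ S)) : isRep Γ S (repfun Γ S m) :=
  (Finset.mem_filter.1 (repfun_mem_reps Γ S m)).2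

lemma erel_repfun (m : Fin (lS Γ S)) {i : Fin n} (h : erel Γ S (repfun Γ S m) i) :
    repfun Γ S m ≤ i := repfun_isRep Γ S m i h

/-- The index of the component of vertex `i`. -/
def fS (i : Fin n) : Fin (lS Γ S) :=
  ((reps Γ S).orderIsoOfFin rfl).symm ⟨crep Γ S i, crep_mem_reps Γ S i⟩

lemma repfun_fS (i : Fin n) : repfun Γ S (fS Γ S i) = crep Γ S i := by
  rw [repfun, fS, OrderIso.apply_symm_apply]

lemma fS_repfun (m : Fin (lS Γ S)) : fS Γ S (repfun Γ S m) = m := by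
  rw [fS]
  have h1 : (⟨crep Γ S (repfun Γ S m), crep_mem_reps Γ S _⟩ : ↥(reps Γ S))
      = (reps Γ S).orderIsoOfFin rfl m := by
    apply Subtype.ext
    exact crep_of_isRep Γ S (repfun_isRep Γ S m)
  rw [h1]; exact OrderIso.symm_apply_apply _ _

lemma fS_eq_iff (i : Fin n) (m : Fin (lS Γ S)) :
    fS Γ S i = m ↔ erel Γ S (repfun Γ S m) i := by
  constructor
  · intro h
    rw [← h, repfun_fS]
    exact erel_crep Γ S i
  · intro h
    have hcrep : crep Γ S i = repfun Γ S m := by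
      rw [crep_eq_of_erel Γ S (erel_symm Γ S h), crep_of_isRep Γ S (repfun_isRep Γ S m)]
    have h2 : fS Γ S i = fS Γ S (repfun Γ S m) := by
      rw [fS, fS]
      congr 1
      exact Subtype.ext (hcrep.trans (crep_of_isRep Γ S (repfun_isRep Γ S m)).symm)
    rw [h2, fS_repfun]

lemma fS_eq_of_erel {i j : Fin n} (h : erel Γ S i j) : fS Γ S i = fS Γ S j := by
  rw [fS, fS]
  congr 1
  exact Subtype.ext (crep_eq_of_erel Γ S h)

lemma filter_fS_eq (m : Fin (lS Γ S)) :
    Finset.univ.filter (fun i => fS Γ S i = m)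
      = Finset.univ.filter (fun i => erel Γ S (repfun Γ S m) i) := by
  ext i
  simp only [Finset.mem_filter, Finset.mem_univ, true_and]
  exact fS_eq_iff Γ S i m

end Components

end Stmt13
namespace Stmt13

open Finset PiTensorProduct

section Glue

variable {k : Type} [CommRing k]

/-- Pure tensors of spanning sets span. -/
lemma tmul_mem_span {M N : Type} [AddCommGroup M] [AddCommGroup N]
    [Module k M] [Module k N] {s : Set M} {t : Set N} {m : M} {nn : N}
    (hm : m ∈ Submodule.span k s) (hn : nn ∈ Submodule.span k t) :
    m ⊗ₜ[k] nn ∈ Submodule.span k {z : M ⊗[k] N | ∃ u ∈ s, ∃ v ∈ t, z = u ⊗ₜ[k] v} := by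
  induction hm using Submodule.span_induction with
  | mem u hu =>
    induction hn using Submodule.span_induction with
    | mem v hv => exact Submodule.subset_span ⟨u, hu, v, hv, rfl⟩
    | zero => rw [TensorProduct.tmul_zero]; exact Submodule.zero_mem _
    | add x y _ _ hx hy => rw [TensorProduct.tmul_add]; exact Submodule.add_mem _ hx hy
    | smul c x _ hx => rw [TensorProduct.tmul_smul]; exact Submodule.smul_mem _ c hx
  | zero => rw [TensorProduct.zero_tmul]; exact Submodule.zero_mem _
  | add x y _ _ hx hy => rw [TensorProduct.add_tmul]; exact Submodule.add_mem _ hx hy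
  | smul c x _ hx => rw [← TensorProduct.smul_tmul']; exact Submodule.smul_mem _ c hx

end Glue

section Main

variable (k A : Type) [CommRing k] [CommRing A] [Algebra k A] {n : ℕ}
variable (Γ : SimpleGraph (Fin n)) [LinearOrder ↥Γ.edgeSet]

lemma gen_eq_genE (e : ↥Γ.edgeSet) : gen k Γ e = genE k ↥Γ.edgeSet e := by
  rw [gen, genE]

lemma edgeMonomial_eq_monE (S : Finset ↥Γ.edgeSet) :
    edgeMonomial k Γ S = monE k ↥Γ.edgeSet S := by
  rw [edgeMonomial, monE, genProdE]
  congr 1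
  apply List.ext_getElem
  · simp
  · intro i h1 h2
    rw [List.getElem_ofFn, List.getElem_map, gen_eq_genE]
    congr 1

lemma edgeMonomial_one : edgeMonomial k Γ (∅ : Finset ↥Γ.edgeSet) = 1 := by
  rw [edgeMonomial_eq_monE, monE_empty]

/-- The set of monomial pure tensors. -/
def genset : Set (GraphExt k Γ ⊗[k] TPow k A n) :=
  {z | ∃ (S : Finset ↥Γ.edgeSet) (a : Fin n → A),
    z = edgeMonomial k Γ S ⊗ₜ[k] PiTensorProduct.tprod k a}

lemma span_genset : Submodule.span k (genset k A Γ) = ⊤ := by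
  rw [eq_top_iff, ← TensorProduct.span_tmul_eq_top k (GraphExt k Γ) (TPow k A n),
    Submodule.span_le]
  rintro z ⟨x, y, rfl⟩
  have hx : x ∈ Submodule.span k (Set.range (edgeMonomial k Γ)) := by
    have hfun : edgeMonomial k Γ = monE k ↥Γ.edgeSet :=
      funext (edgeMonomial_eq_monE k Γ)
    rw [hfun, span_monE]
    trivial
  have hy : y ∈ Submodule.span k (Set.range (PiTensorProduct.tprod k (s := fun _ : Fin n => A))) := by
    rw [PiTensorProduct.span_tprod_eq_top]; trivial
  have := tmul_mem_span hx hy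
  refine Submodule.span_le.2 ?_ this
  rintro w ⟨u, ⟨S, rfl⟩, v, ⟨a, rfl⟩, rfl⟩
  exact Submodule.subset_span ⟨S, a, rfl⟩

/-- Relation in the ideal with a fixed monomial in front: single edge version. -/
lemma idealA {S : Finset ↥Γ.edgeSet} {e : ↥Γ.edgeSet} (he : e ∈ S) {i j : Fin n}
    (hij : (e : Sym2 (Fin n)) = s(i, j)) (x : TPow k A n) (a : A) :
    edgeMonomial k Γ S ⊗ₜ[k] (x * (elemAt k A i a - elemAt k A j a)) ∈ relIdeal k A Γ := by
  have hV : e ∉ S.erase e := Finset.notMem_erase e S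
  obtain ⟨c, hc, hmul⟩ := genE_mul_monE_not_mem (k := k) (E := ↥Γ.edgeSet) hV
  rw [Finset.insert_erase he] at hmul
  have hmul' : gen k Γ e * edgeMonomial k Γ (S.erase e) = c • edgeMonomial k Γ S := by
    rw [gen_eq_genE, edgeMonomial_eq_monE, edgeMonomial_eq_monE]
    exact hmul
  set d := elemAt k A i a - elemAt k A j a with hd
  have hz : ((1 : GraphExt k Γ) ⊗ₜ[k] x) * (gen k Γ e ⊗ₜ[k] d)
        * (edgeMonomial k Γ (S.erase e) ⊗ₜ[k] (1 : TPow k A n))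
      = c • (edgeMonomial k Γ S ⊗ₜ[k] (x * d)) := by
    rw [Algebra.TensorProduct.tmul_mul_tmul, Algebra.TensorProduct.tmul_mul_tmul,
      one_mul, mul_one, hmul', TensorProduct.smul_tmul']
  have hgen : ((1 : GraphExt k Γ) ⊗ₜ[k] x) * (gen k Γ e ⊗ₜ[k] d)
      * (edgeMonomial k Γ (S.erase e) ⊗ₜ[k] (1 : TPow k A n)) ∈ relIdeal k A Γ :=
    Submodule.subset_span ⟨_, _, e, i, j, a, hij, rfl⟩
  have hmem := Submodule.smul_mem _ c hgen
  rw [hz, smul_smul, hc, one_smul] at hmem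
  exact hmem

/-- Relation in the ideal: connected vertices. -/
lemma idealB {S : Finset ↥Γ.edgeSet} {i j : Fin n} (h : erel Γ S i j)
    (x : TPow k A n) (a : A) :
    edgeMonomial k Γ S ⊗ₜ[k] (x * elemAt k A i a - x * elemAt k A j a)
      ∈ relIdeal k A Γ := by
  induction h with
  | refl =>
    rw [sub_self, TensorProduct.tmul_zero]
    exact Submodule.zero_mem _
  | @tail b c hR hr ih =>
    obtain ⟨e, he, hs⟩ := hr
    have h2 : x * elemAt k A i a - x * elemAt k A c a
        = (x * elemAt k A i a - x * elemAt k A b a)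
          + x * (elemAt k A b a - elemAt k A c a) := by ring
    rw [h2, TensorProduct.tmul_add]
    exact add_mem ih (idealA k A Γ he hs x a)

/-- Telescoping products through the ideal. -/
lemma idealT {S : Finset ↥Γ.edgeSet} {τ : Type} (F : Finset τ) (P Q : τ → TPow k A n)
    (h : ∀ r ∈ F, ∀ x : TPow k A n,
      edgeMonomial k Γ S ⊗ₜ[k] (x * P r - x * Q r) ∈ relIdeal k A Γ) :
    ∀ x : TPow k A n,
      edgeMonomial k Γ S ⊗ₜ[k] (x * ∏ r ∈ F, P r - x * ∏ r ∈ F, Q r)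
        ∈ relIdeal k A Γ := by
  classical
  induction F using Finset.induction_on with
  | empty =>
    intro x
    rw [Finset.prod_empty, Finset.prod_empty, sub_self, TensorProduct.tmul_zero]
    exact Submodule.zero_mem _
  | @insert j F hj ih =>
    intro x
    have hsplit : x * ∏ r ∈ insert j F, P r - x * ∏ r ∈ insert j F, Q r
        = ((x * ∏ r ∈ F, P r) * P j - (x * ∏ r ∈ F, P r) * Q j)
          + ((x * Q j) * ∏ r ∈ F, P r - (x * Q j) * ∏ r ∈ F, Q r) := by
      rw [Finset.prod_insert hj, Finset.prod_insert hj]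
      ring
    rw [hsplit, TensorProduct.tmul_add]
    exact add_mem (h j (Finset.mem_insert_self j F) _)
      (ih (fun r hr x => h r (Finset.mem_insert_of_mem hr) x) _)

/-- Main congruence: a pure tensor is congruent to its component-collapsed form. -/
lemma idealD (S : Finset ↥Γ.edgeSet) (a : Fin n → A) :
    edgeMonomial k Γ S ⊗ₜ[k]
      (PiTensorProduct.tprod k a
        - Tmap (repfun Γ S) (PiTensorProduct.tprod k (fun m => bval A Γ S a m)))
      ∈ relIdeal k A Γ := by
  classical
  have hP : (PiTensorProduct.tprod k a : TPow k A n)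
      = ∏ m : Fin (lS Γ S), ∏ i ∈ Finset.univ.filter (fun i => fS Γ S i = m),
          elemAt k A i (a i) := by
    rw [tprod_eq_prod_elemAt]
    exact (Finset.prod_fiberwise_of_maps_to (fun i _ => Finset.mem_univ (fS Γ S i)) _).symm
  have hQ : Tmap (repfun Γ S) (PiTensorProduct.tprod k (fun m => bval A Γ S a m))
      = ∏ m : Fin (lS Γ S), ∏ i ∈ Finset.univ.filter (fun i => fS Γ S i = m),
          elemAt k A (repfun Γ S m) (a i) := by
    rw [Tmap_tprod]
    apply Finset.prod_congr rfl
    intro m _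
    rw [bval, elemAt_prod, filter_fS_eq]
  have hmain := idealT k A Γ (S := S) (Finset.univ : Finset (Fin (lS Γ S)))
    (fun m => ∏ i ∈ Finset.univ.filter (fun i => fS Γ S i = m), elemAt k A i (a i))
    (fun m => ∏ i ∈ Finset.univ.filter (fun i => fS Γ S i = m), elemAt k A (repfun Γ S m) (a i))
    ?_ 1
  · rw [one_mul, one_mul] at hmain
    rw [hP, hQ]
    exact hmain
  · intro m _ x
    apply idealT k A Γ (Finset.univ.filter (fun i => fS Γ S i = m))
      (fun i => elemAt k A i (a i)) (fun i => elemAt k A (repfun Γ S m) (a i))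
    intro i hi x'
    have hrel : erel Γ S i (repfun Γ S m) := by
      apply erel_symm
      rw [← fS_eq_iff]
      exact (Finset.mem_filter.1 hi).2
    exact idealB k A Γ hrel x' (a i)

end Main

end Stmt13
namespace Stmt13

open Finset PiTensorProduct

set_option synthInstance.maxHeartbeats 1000000
set_option maxHeartbeats 1600000

section Assemble

variable (k A : Type) [CommRing k] [CommRing A] [Algebra k A] {n : ℕ}
variable (Γ : SimpleGraph (Fin n)) [LinearOrder ↥Γ.edgeSet]

/-- Collapse map for component `S`, landing in the `S`-summand. -/
def muS (S : Finset ↥Γ.edgeSet) : TPow k A n →ₗ[k] BSTarget k A Γ :=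
  (DirectSum.lof k (Finset ↥Γ.edgeSet) (fun T => ⨂[k] (_ : Fin (lS Γ T)), A) S)
    ∘ₗ (Tmap (fun i => fS Γ S i)).toLinearMap

/-- The Λ-side decomposition, combined with the collapse maps. -/
def Bmap : GraphExt k Γ →ₗ[k] (TPow k A n →ₗ[k] BSTarget k A Γ) :=
  (Finsupp.lsum k fun S => LinearMap.toSpanSingleton k _ (muS k A Γ S))
    ∘ₗ fock k ↥Γ.edgeSet

/-- The main map before quotienting. -/
def Phi0 : (GraphExt k Γ ⊗[k] TPow k A n) →ₗ[k] BSTarget k A Γ :=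
  TensorProduct.lift (Bmap k A Γ)

lemma Bmap_edgeMonomial (S : Finset ↥Γ.edgeSet) :
    Bmap k A Γ (edgeMonomial k Γ S) = muS k A Γ S := by
  rw [Bmap, LinearMap.comp_apply, edgeMonomial_eq_monE, fock_monE,
    Finsupp.lsum_single, LinearMap.toSpanSingleton_apply_one]

lemma muS_tprod (S : Finset ↥Γ.edgeSet) (a : Fin n → A) :
    muS k A Γ S (PiTensorProduct.tprod k a)
      = DirectSum.of (fun T => ⨂[k] (_ : Fin (lS Γ T)), A) S
          (PiTensorProduct.tprod k fun m => bval A Γ S a m) := by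
  rw [muS, LinearMap.comp_apply, AlgHom.toLinearMap_apply, Tmap_tprod, prod_elemAt,
    ← DirectSum.lof_eq_of k]
  have hb : (fun m => ∏ i ∈ Finset.univ.filter (fun i => fS Γ S i = m), a i)
      = fun m => bval A Γ S a m := by
    funext m
    rw [bval, filter_fS_eq]
  rw [hb]

lemma Phi0_monomial (S : Finset ↥Γ.edgeSet) (a : Fin n → A) :
    Phi0 k A Γ (edgeMonomial k Γ S ⊗ₜ[k] PiTensorProduct.tprod k a)
      = DirectSum.of (fun T => ⨂[k] (_ : Fin (lS Γ T)), A) S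
          (PiTensorProduct.tprod k fun m => bval A Γ S a m) := by
  rw [Phi0, TensorProduct.lift.tmul, Bmap_edgeMonomial, muS_tprod]

lemma Phi0_ker : relIdeal k A Γ ≤ LinearMap.ker (Phi0 k A Γ) := by
  rw [relIdeal, Submodule.span_le]
  rintro z ⟨p, q, e, i, j, a, hij, rfl⟩
  rw [SetLike.mem_coe, LinearMap.mem_ker]
  set d : TPow k A n := elemAt k A i a - elemAt k A j a with hd
  have key : ∀ (S T : Finset ↥Γ.edgeSet) (b c' : Fin n → A),
      Phi0 k A Γ ((edgeMonomial k Γ S ⊗ₜ[k] PiTensorProduct.tprod k b)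
        * (gen k Γ e ⊗ₜ[k] d)
        * (edgeMonomial k Γ T ⊗ₜ[k] PiTensorProduct.tprod k c')) = 0 := by
    intro S T b c'
    obtain ⟨c0, U, heU, hU⟩ := monE_mul_genE_mul_monE (k := k) (E := ↥Γ.edgeSet) S T e
    have hU' : edgeMonomial k Γ S * gen k Γ e * edgeMonomial k Γ T
        = c0 • edgeMonomial k Γ U := by
      rw [gen_eq_genE, edgeMonomial_eq_monE, edgeMonomial_eq_monE, edgeMonomial_eq_monE]
      exact hU
    rw [Algebra.TensorProduct.tmul_mul_tmul, Algebra.TensorProduct.tmul_mul_tmul, hU',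
      ← TensorProduct.smul_tmul', map_smul]
    rw [Phi0, TensorProduct.lift.tmul, Bmap_edgeMonomial, muS, LinearMap.comp_apply,
      AlgHom.toLinearMap_apply]
    have hzero : Tmap (fun i' => fS Γ U i')
        ((PiTensorProduct.tprod k b) * d * (PiTensorProduct.tprod k c')) = 0 := by
      rw [_root_.map_mul, _root_.map_mul, hd, _root_.map_sub, Tmap_elemAt, Tmap_elemAt]
      have hfij : fS Γ U i = fS Γ U j := fS_eq_of_erel Γ U (edge_erel Γ U heU hij)
      rw [hfij, sub_self, mul_zero, zero_mul]
    rw [hzero, map_zero, smul_zero]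
  have hp : p ∈ Submodule.span k (genset k A Γ) := by rw [span_genset]; trivial
  have hq : q ∈ Submodule.span k (genset k A Γ) := by rw [span_genset]; trivial
  induction hp using Submodule.span_induction with
  | mem u hu =>
    induction hq using Submodule.span_induction with
    | mem v hv =>
      obtain ⟨S, b, rfl⟩ := hu
      obtain ⟨T, c', rfl⟩ := hv
      exact key S T b c'
    | zero => rw [mul_zero, map_zero]
    | add v w _ _ ihv ihw => rw [mul_add, map_add, ihv, ihw, add_zero]
    | smul c0 v _ ihv => rw [mul_smul_comm, map_smul, ihv, smul_zero]
  | zero => rw [zero_mul, zero_mul, map_zero]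
  | add u w _ _ ihu ihw => rw [add_mul, add_mul, map_add, ihu, ihw, add_zero]
  | smul c0 u _ ihu => rw [smul_mul_assoc, smul_mul_assoc, map_smul, ihu, smul_zero]

/-- The inverse map. -/
def psi : BSTarget k A Γ →ₗ[k] ((GraphExt k Γ ⊗[k] TPow k A n) ⧸ relIdeal k A Γ) :=
  DirectSum.toModule k (Finset ↥Γ.edgeSet) _ fun S =>
    (relIdeal k A Γ).mkQ
      ∘ₗ ((TensorProduct.mk k (GraphExt k Γ) (TPow k A n)) (edgeMonomial k Γ S))
      ∘ₗ (Tmap (repfun Γ S)).toLinearMap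

lemma psi_of (S : Finset ↥Γ.edgeSet) (x : ⨂[k] (_ : Fin (lS Γ S)), A) :
    psi k A Γ (DirectSum.of (fun T => ⨂[k] (_ : Fin (lS Γ T)), A) S x)
      = Submodule.Quotient.mk (edgeMonomial k Γ S ⊗ₜ[k] Tmap (repfun Γ S) x) := by
  rw [psi, ← DirectSum.lof_eq_of k, DirectSum.toModule_lof]
  rfl

lemma Tmap_collapse (S : Finset ↥Γ.edgeSet) (b : Fin (lS Γ S) → A) :
    Tmap (fun i => fS Γ S i) (Tmap (repfun Γ S) (PiTensorProduct.tprod k b))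
      = PiTensorProduct.tprod k b := by
  rw [Tmap_tprod, _root_.map_prod]
  simp only [Tmap_elemAt, fS_repfun]
  exact (tprod_eq_prod_elemAt b).symm

end Assemble

end Stmt13
set_option synthInstance.maxHeartbeats 1000000
set_option maxHeartbeats 1600000

open Stmt13 in
theorem quotient_iso_directSum_tensorPowers
    (Γ : SimpleGraph (Fin n)) [LinearOrder ↥Γ.edgeSet] :
    ∃ φ : (GraphExt k Γ ⊗[k] TPow k A n ⧸ relIdeal k A Γ) →ₗ[k] BSTarget k A Γ,
      (∀ (S : Finset ↥Γ.edgeSet) (a : Fin n → A),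
        φ (Submodule.Quotient.mk (edgeMonomial k Γ S ⊗ₜ[k] PiTensorProduct.tprod k a)) =
          DirectSum.of _ S (PiTensorProduct.tprod k fun m => bval A Γ S a m)) ∧
      Function.Bijective φ := by
  classical
  refine ⟨Submodule.liftQ _ (Phi0 k A Γ) (Phi0_ker k A Γ), ?_, ?_⟩
  · intro S a
    rw [Submodule.liftQ_apply]
    exact Phi0_monomial k A Γ S a
  · have hleft : ∀ x, psi k A Γ
        (Submodule.liftQ _ (Phi0 k A Γ) (Phi0_ker k A Γ) x) = x := by
      intro x
      obtain ⟨y, rfl⟩ := Submodule.mkQ_surjective _ x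
      have hy : y ∈ Submodule.span k (genset k A Γ) := by
        rw [span_genset]; trivial
      induction hy using Submodule.span_induction with
      | mem z hz =>
        obtain ⟨S, a, rfl⟩ := hz
        rw [Submodule.mkQ_apply, Submodule.liftQ_apply, Phi0_monomial, psi_of,
          Submodule.Quotient.eq]
        have h2 : edgeMonomial k Γ S ⊗ₜ[k] Tmap (repfun Γ S)
              (PiTensorProduct.tprod k fun m => bval A Γ S a m)
            - edgeMonomial k Γ S ⊗ₜ[k] PiTensorProduct.tprod k a
            = -(edgeMonomial k Γ S ⊗ₜ[k] (PiTensorProduct.tprod k a -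
                Tmap (repfun Γ S)
                  (PiTensorProduct.tprod k fun m => bval A Γ S a m))) := by
          rw [TensorProduct.tmul_sub, neg_sub]
        rw [h2]
        exact neg_mem (idealD k A Γ S a)
      | zero => rw [map_zero, map_zero, map_zero]
      | add u v _ _ ihu ihv => rw [map_add, map_add, map_add, ihu, ihv]
      | smul c u _ ihu => rw [map_smul, map_smul, map_smul, ihu]
    have hright : ∀ t, Submodule.liftQ _ (Phi0 k A Γ) (Phi0_ker k A Γ)
        (psi k A Γ t) = t := by
      have hcomp : (Submodule.liftQ _ (Phi0 k A Γ) (Phi0_ker k A Γ)).comp (psi k A Γ)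
          = LinearMap.id := by
        apply DirectSum.linearMap_ext
        intro S
        apply PiTensorProduct.ext
        apply MultilinearMap.ext
        intro b
        simp only [LinearMap.compMultilinearMap_apply, LinearMap.comp_apply,
          LinearMap.id_coe, id_eq]
        rw [DirectSum.lof_eq_of, psi_of, Submodule.liftQ_apply, Phi0,
          TensorProduct.lift.tmul, Bmap_edgeMonomial, muS, LinearMap.comp_apply,
          AlgHom.toLinearMap_apply, Tmap_collapse, DirectSum.lof_eq_of]
      intro t
      exact LinearMap.congr_fun hcomp t
    exact ⟨fun u v huv => by rw [← hleft u, huv, hleft v],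
      fun t => ⟨psi k A Γ t, hright t⟩⟩

end
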